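/- The conjugacy-class average of the excedance statistic satisfies R exc = (n − m_1)/2 as a function on S_n: for any w ∈ S_n, the average of exc over the conjugacy class of w equals (n − m_1(w))/2, where m_1(w) is the number of fixed points of w. -/

import Mathlib

open Finset

/-- The excedance statistic: `exc(w) = #{i : w(i) > i}`. -/
def excStat {n : ℕ} (w : Equiv.Perm (Fin n)) : ℕ :=
  (Finset.univ.filter (fun i : Fin n => i < w i)).card

/-- The number of fixed points `m_1(w)` of a permutation `w`. -/
def numFixed {n : ℕ} (w : Equiv.Perm (Fin n)) : ℕ :=
  (Finset.univ.filter (fun i : Fin n => w i = i)).card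

/-- The Reynolds operator: `R f(w) = (1/n!) ∑_{v ∈ S_n} f(v⁻¹ w v)`. -/
noncomputable def reynolds {n : ℕ} (f : Equiv.Perm (Fin n) → ℝ)
    (w : Equiv.Perm (Fin n)) : ℝ :=
  (n.factorial : ℝ)⁻¹ * ∑ v : Equiv.Perm (Fin n), f (v⁻¹ * w * v)

lemma excStat_inv {n : ℕ} (u : Equiv.Perm (Fin n)) :
    excStat u⁻¹ = (Finset.univ.filter (fun i : Fin n => u i < i)).card := by
  unfold excStat
  apply Finset.card_bij (fun i _ => u⁻¹ i)
  · intro i hi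
    simp only [mem_filter, mem_univ, true_and] at hi ⊢
    simpa using hi
  · intro a ha b hb h
    exact u⁻¹.injective h
  · intro b hb
    refine ⟨u b, ?_, by simp⟩
    simp only [mem_filter, mem_univ, true_and] at hb ⊢
    simpa using hb

lemma exc_add_exc_inv {n : ℕ} (u : Equiv.Perm (Fin n)) :
    excStat u + excStat u⁻¹ + numFixed u = n := by
  rw [excStat_inv]
  unfold excStat numFixed
  have h1 : (Finset.univ.filter (fun i : Fin n => i < u i)).card
      + (Finset.univ.filter (fun i : Fin n => ¬ i < u i)).card = n := by
    rw [Finset.card_filter_add_card_filter_not, Finset.card_univ, Fintype.card_fin]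
  have h2 : Finset.univ.filter (fun i : Fin n => ¬ i < u i)
      = (Finset.univ.filter (fun i : Fin n => u i < i))
        ∪ (Finset.univ.filter (fun i : Fin n => u i = i)) := by
    ext i
    simp only [mem_filter, mem_univ, true_and, mem_union, not_lt]
    constructor
    · intro h
      exact h.lt_or_eq
    · rintro (h | h)
      · exact h.le
      · exact h.le
  have h3 : Disjoint (Finset.univ.filter (fun i : Fin n => u i < i))
      (Finset.univ.filter (fun i : Fin n => u i = i)) := by
    rw [Finset.disjoint_filter]
    intro i _ h h'
    exact absurd h' h.ne
  rw [h2, Finset.card_union_of_disjoint h3] at h1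
  omega

lemma numFixed_conj {n : ℕ} (v w : Equiv.Perm (Fin n)) :
    numFixed (v⁻¹ * w * v) = numFixed w := by
  unfold numFixed
  apply Finset.card_bij (fun i _ => v i)
  · intro i hi
    simp only [mem_filter, mem_univ, true_and, Equiv.Perm.mul_apply] at hi ⊢
    have := congrArg v (Finset.mem_filter.mp hi).2
    simpa using this
  · intro a _ b _ h; exact v.injective h
  · intro b hb
    refine ⟨v⁻¹ b, ?_, by simp⟩
    simp only [mem_filter, mem_univ, true_and, Equiv.Perm.mul_apply] at hb ⊢
    exact Finset.mem_filter.mpr ⟨mem_univ _, by simp [hb]⟩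

/-- `R exc = (n − m_1)/2`: the average of the excedance statistic over the conjugacy class
of any `w ∈ S_n` is `(n − m_1(w))/2`, where `m_1(w)` is the number of fixed points. -/
theorem reynolds_exc {n : ℕ} (w : Equiv.Perm (Fin n)) :
    reynolds (fun u => (excStat u : ℝ)) w = ((n : ℝ) - numFixed w) / 2 := by
  have hconj : IsConj w w⁻¹ := by
    rw [Equiv.Perm.isConj_iff_cycleType_eq, Equiv.Perm.cycleType_inv]
  obtain ⟨g, hg⟩ := hconj
  have hg' : ∀ v : Equiv.Perm (Fin n), v⁻¹ * w⁻¹ * v = ((g : Equiv.Perm (Fin n))⁻¹ * v)⁻¹ * w * ((g : Equiv.Perm (Fin n))⁻¹ * v) := by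
    intro v
    have h0 : (g : Equiv.Perm (Fin n)) * w * (g : Equiv.Perm (Fin n))⁻¹ = w⁻¹ := by
      rw [hg.eq]; simp [mul_assoc]
    rw [← h0]
    group
  have hsum : ∑ v : Equiv.Perm (Fin n), ((excStat ((v⁻¹ * w * v)⁻¹) : ℝ))
      = ∑ v : Equiv.Perm (Fin n), (excStat (v⁻¹ * w * v) : ℝ) := by
    calc ∑ v : Equiv.Perm (Fin n), ((excStat ((v⁻¹ * w * v)⁻¹) : ℝ))
        = ∑ v : Equiv.Perm (Fin n), (excStat (v⁻¹ * w⁻¹ * v) : ℝ) := by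
          apply Finset.sum_congr rfl; intro v _
          congr 1
      _ = ∑ v : Equiv.Perm (Fin n), (excStat (((g : Equiv.Perm (Fin n))⁻¹ * v)⁻¹ * w * ((g : Equiv.Perm (Fin n))⁻¹ * v)) : ℝ) := by
          apply Finset.sum_congr rfl; intro v _
          rw [hg' v]
      _ = ∑ v : Equiv.Perm (Fin n), (excStat (v⁻¹ * w * v) : ℝ) := by
          exact Fintype.sum_equiv (Equiv.mulLeft (g : Equiv.Perm (Fin n))⁻¹) _ _ (fun v => rfl)
  have key : (2 : ℝ) * ∑ v : Equiv.Perm (Fin n), (excStat (v⁻¹ * w * v) : ℝ)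
      = (n.factorial : ℝ) * ((n : ℝ) - numFixed w) := by
    have : ∀ v : Equiv.Perm (Fin n),
        (excStat (v⁻¹ * w * v) : ℝ) + (excStat ((v⁻¹ * w * v)⁻¹) : ℝ)
          = (n : ℝ) - numFixed w := by
      intro v
      have h := exc_add_exc_inv (v⁻¹ * w * v)
      have hfix := numFixed_conj v w
      have := congrArg (fun k : ℕ => (k : ℝ)) h
      push_cast at this
      rw [hfix] at this
      linarith
    have := Finset.sum_congr rfl (fun v (_ : v ∈ Finset.univ) => this v)
    rw [Finset.sum_add_distrib, hsum, Finset.sum_const, Finset.card_univ,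
      Fintype.card_perm, Fintype.card_fin, nsmul_eq_mul] at this
    push_cast at this
    linarith
  unfold reynolds
  have hfac : (n.factorial : ℝ) ≠ 0 := by positivity
  have hS : ∑ v : Equiv.Perm (Fin n), (excStat (v⁻¹ * w * v) : ℝ)
      = (n.factorial : ℝ) * ((n : ℝ) - numFixed w) / 2 := by linarith
  rw [hS]
  field_simp
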